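/- Let y be a real number with y > √3 and define v₀(y) := max{V₃, 2C₃/|y²−3| + 1} with the constants C₁, C₂, C₃, V₁, V₂, V₃ as specified. Then for every real v ≥ v₀(y) one has G(v,y) < 1, where G(v,y) := v·∫_1^{√(v/(v−2))} ((v+y²)/(v+y²x²))^{(v+1)/2} dx. -/

import Mathlib

open MeasureTheory Real intervalIntegral

/-- The comparison function `G(v, y)`. -/
noncomputable def G (v y : ℝ) : ℝ :=
  v * ∫ x in (1 : ℝ)..Real.sqrt (v / (v - 2)),
    ((v + y ^ 2) / (v + y ^ 2 * x ^ 2)) ^ ((v + 1) / 2)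

lemma exp_quad (r : ℝ) (hr : 0 ≤ r) : Real.exp (-r) ≤ 1 - r + r^2 := by
  have h1 : 1 + r ≤ Real.exp r := by linarith [Real.add_one_le_exp r]
  have h2 : Real.exp (-r) * Real.exp r = 1 := by rw [← Real.exp_add]; simp
  nlinarith [Real.exp_pos r, Real.exp_pos (-r), sq_nonneg r,
    mul_pos (Real.exp_pos (-r)) (Real.exp_pos r)]

set_option maxHeartbeats 1000000 in
lemma final_arith (w δ c q : ℝ) (hw : 98 ≤ w) (hq : 3 < q)
    (h8 : 8*q ≤ w+2) (h32 : 3*q^2 ≤ 2*(w+2))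
    (hA : (26/3)*q^2 + 35*q + 25 ≤ (q-3)*w)
    (hδl : 1/(w+2) ≤ δ)
    (hδu : δ ≤ 1/w - 1/(2*w^2) + 1/(2*w^3))
    (hc : c = (w+3)*w*q/((w+2)*(w+q))) :
    (w+2)*(δ - c*δ^2/2 + c^2*δ^3/3) < 1 := by
  have hw0 : (0:ℝ) < w := by linarith
  have hv0 : (0:ℝ) < w + 2 := by linarith
  have hq0 : (0:ℝ) < q := by linarith
  have hwq : (0:ℝ) < w + q := by linarith
  have hδ0 : 0 ≤ δ := le_trans (by positivity) hδl
  have hc0 : 0 ≤ c := by rw [hc]; positivity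
  have hcu : c ≤ (101/100)*q := by
    rw [hc, div_le_iff₀ (by positivity)]
    nlinarith
  have hδu' : δ ≤ 1/w := by
    have : 1/(2*w^3) ≤ 1/(2*w^2) := by
      rw [div_le_div_iff₀ (by positivity) (by positivity)]; nlinarith
    linarith
  -- term A
  have hA1 : (w+2)*δ ≤ 1 + 3/(2*w) + 1/w^3 := by
    have h1 : (w+2)*δ ≤ (w+2)*(1/w - 1/(2*w^2) + 1/(2*w^3)) :=
      mul_le_mul_of_nonneg_left hδu (by linarith)
    have h2 : (1 + 3/(2*w) + 1/w^3) - (w+2)*(1/w - 1/(2*w^2) + 1/(2*w^3)) = 1/(2*w^2) := by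
      field_simp; ring
    nlinarith [one_div_pos.mpr (mul_pos two_pos (pow_pos hw0 2))]
  -- term B
  have hB : c/(2*(w+2)) ≤ (w+2)*(c*δ^2)/2 := by
    have h1 : (1/(w+2))^2 ≤ δ^2 := by
      apply pow_le_pow_left₀ (by positivity) hδl
    have h2 : c * (1/(w+2))^2 ≤ c * δ^2 := mul_le_mul_of_nonneg_left h1 hc0
    have h3 : (w+2)*(c*(1/(w+2))^2)/2 = c/(2*(w+2)) := by field_simp
    nlinarith
  -- term C
  have hC : (w+2)*(c^2*δ^3)/3 ≤ (10201/30000)*(w+2)*q^2/w^3 := by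
    have h1 : δ^3 ≤ (1/w)^3 := pow_le_pow_left₀ hδ0 hδu' 3
    have h2 : c^2 ≤ ((101/100)*q)^2 := pow_le_pow_left₀ hc0 hcu 2
    have h3 : c^2*δ^3 ≤ ((101/100)*q)^2 * (1/w)^3 := by
      apply mul_le_mul h2 h1 (by positivity) (by positivity)
    have h4 : (w+2)*(((101/100)*q)^2 * (1/w)^3)/3 = (10201/30000)*(w+2)*q^2/w^3 := by
      field_simp; ring
    have h5 : (w+2)*(c^2*δ^3) ≤ (w+2)*(((101/100)*q)^2 * (1/w)^3) :=
      mul_le_mul_of_nonneg_left h3 (le_of_lt hv0)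
    linarith
  -- final combination
  have key : c/(2*(w+2)) - 3/(2*w) - 1/w^3 - (10201/30000)*(w+2)*q^2/w^3
      = (15000*(w+3)*q*w^4 - 45000*(w+2)^2*(w+q)*w^2 - 30000*(w+2)^2*(w+q)
        - 10201*(w+2)^3*q^2*(w+q)) / (30000*(w+2)^2*(w+q)*w^3) := by
    rw [hc]; field_simp; ring
  have hw4 : (0:ℝ) < w^4 := by positivity
  have hqw4 : (0:ℝ) ≤ q*w^4 := by positivity
  have hq2w4 : (0:ℝ) ≤ q^2*w^4 := by positivity
  have e2 : w + q ≤ (8/7)*w := by linarith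
  have g1 : 130000*q^2*w^4 + 525000*q*w^4 + 375000*w^4 ≤ 15000*((q-3)*w)*w^4 := by
    have := mul_le_mul_of_nonneg_right hA (le_of_lt hw4)
    linarith
  have g2 : 10201*(w+2)^3*q^2*(w+q) ≤ 13000*q^2*w^4 := by
    have e1 : (w+2)^3 ≤ ((50/49)*w)^3 := by
      apply pow_le_pow_left₀ (by linarith) (by linarith)
    have e3 := mul_le_mul_of_nonneg_left
      (mul_le_mul e1 e2 (by linarith) (by positivity)) (sq_nonneg q)
    nlinarith [e3, hq2w4]
  have g3 : 180000*q*w^3 ≤ 2000*q*w^4 := by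
    nlinarith [mul_nonneg (mul_nonneg hq0.le (pow_nonneg hw0.le 3)) (by linarith : (0:ℝ) ≤ w - 98),
      mul_nonneg hq0.le (pow_nonneg hw0.le 3)]
  have g4 : 180000*w^3 ≤ 2000*w^4 := by
    nlinarith [mul_nonneg (pow_nonneg hw0.le 3) (by linarith : (0:ℝ) ≤ w - 98),
      pow_nonneg hw0.le 3]
  have hw2 : (9604:ℝ) ≤ w^2 := by nlinarith
  have g5 : 180000*q*w^2 ≤ 2000*q*w^4 := by
    nlinarith [mul_le_mul_of_nonneg_left hw2 (by positivity : (0:ℝ) ≤ 2000*q*w^2),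
      mul_nonneg hq0.le (sq_nonneg w)]
  have g6 : 30000*(w+2)^2*(w+q) ≤ 400*w^4 := by
    have e1 : (w+2)^2 ≤ ((50/49)*w)^2 := by
      apply pow_le_pow_left₀ (by linarith) (by linarith)
    have e3 := mul_le_mul e1 e2 (by linarith) (by positivity)
    nlinarith [e3, mul_nonneg (pow_nonneg hw0.le 3) (by linarith : (0:ℝ) ≤ w - 98)]
  have hN : 0 < 15000*(w+3)*q*w^4 - 45000*(w+2)^2*(w+q)*w^2 - 30000*(w+2)^2*(w+q)
      - 10201*(w+2)^3*q^2*(w+q) := by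
    nlinarith [g1, g2, g3, g4, g5, g6, hw4, hqw4, hq2w4]
  have hpos : 0 < c/(2*(w+2)) - 3/(2*w) - 1/w^3 - (10201/30000)*(w+2)*q^2/w^3 := by
    rw [key]; positivity
  have expand : (w+2)*(δ - c*δ^2/2 + c^2*δ^3/3)
      = (w+2)*δ - (w+2)*(c*δ^2)/2 + (w+2)*(c^2*δ^3)/3 := by ring
  rw [expand]
  linarith [hA1, hB, hC, hpos]

set_option maxHeartbeats 1000000 in
theorem stmt_14 (y C₁ C₂ C₃ V₁ V₂ V₃ v₀ : ℝ)
    (hy : Real.sqrt 3 < y)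
    (hC₁ : C₁ = 2 * y ^ 6 + (3 / 4) * y ^ 4)
    (hC₂ : C₂ = (9 / 4) * C₁ + (25 / 32) * y ^ 8
        + (3 / 2) * (C₁ ^ ((2 : ℝ) / 3) * y ^ ((8 : ℝ) / 3)
          + C₁ ^ ((1 : ℝ) / 3) * y ^ ((16 : ℝ) / 3)))
    (hC₃ : C₃ = (13 / 3) * y ^ 4 + 18 * y ^ 2 + 2 * C₂ + 11)
    (hV₁ : V₁ = max 100 (8 * y ^ 2))
    (hV₂ : V₂ = max V₁ (max ((3 / 2) * y ^ 4) (Real.sqrt (2 * C₁))))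
    (hV₃ : V₃ = max V₂ (max (2 + 2 * y ^ 2 / (1 + 2 * y))
        (2 + 2 * y ^ 4 / (1 + 2 * y ^ 2))))
    (hv₀ : v₀ = max V₃ (2 * C₃ / |y ^ 2 - 3| + 1)) :
    ∀ v : ℝ, v₀ ≤ v → G v y < 1 := by
  intro v hv
  have hy0 : 0 < y := lt_of_le_of_lt (Real.sqrt_nonneg 3) hy
  have hq3 : 3 < y ^ 2 := by
    nlinarith [Real.sq_sqrt (show (0:ℝ) ≤ 3 by norm_num), Real.sqrt_nonneg 3]
  have hV3v : V₃ ≤ v := le_trans (hv₀ ▸ le_max_left _ _) hv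
  have hV2v : V₂ ≤ v := le_trans (hV₃ ▸ le_max_left _ _) hV3v
  have hV1v : V₁ ≤ v := le_trans (hV₂ ▸ le_max_left _ _) hV2v
  have hv100 : (100:ℝ) ≤ v := le_trans (hV₁ ▸ le_max_left _ _) hV1v
  have h8 : 8 * y ^ 2 ≤ v := le_trans (hV₁ ▸ le_max_right _ _) hV1v
  have h32 : (3/2) * y ^ 4 ≤ v :=
    le_trans (hV₂ ▸ le_trans (le_max_left _ _) (le_max_right _ _)) hV2v
  have hC₁0 : 0 ≤ C₁ := by rw [hC₁]; positivity
  have hC₂0 : 0 ≤ C₂ := by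
    have m1 : 0 ≤ C₁ ^ ((2:ℝ)/3) * y ^ ((8:ℝ)/3) :=
      mul_nonneg (Real.rpow_nonneg hC₁0 _) (Real.rpow_nonneg hy0.le _)
    have m2 : 0 ≤ C₁ ^ ((1:ℝ)/3) * y ^ ((16:ℝ)/3) :=
      mul_nonneg (Real.rpow_nonneg hC₁0 _) (Real.rpow_nonneg hy0.le _)
    rw [hC₂]; nlinarith [m1, m2, hC₁0, pow_nonneg hy0.le 8]
  have hC₃' : (26/3) * y ^ 4 + 36 * y ^ 2 + 22 ≤ 2 * C₃ := by
    rw [hC₃]; linarith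
  have habs : |y ^ 2 - 3| = y ^ 2 - 3 := abs_of_pos (by linarith)
  have hvC : 2 * C₃ / (y ^ 2 - 3) + 1 ≤ v := by
    have := le_trans (hv₀ ▸ le_max_right _ _) hv
    rwa [habs] at this
  have hA' : 2 * C₃ ≤ (y ^ 2 - 3) * (v - 1) := by
    have h1 : 2 * C₃ / (y ^ 2 - 3) ≤ v - 1 := by linarith
    have h2 := mul_le_mul_of_nonneg_right h1 (by linarith : (0:ℝ) ≤ y ^ 2 - 3)
    rw [div_mul_cancel₀] at h2
    · linarith [mul_comm (y^2-3) (v-1)] 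
    · linarith
  have hA : (26/3) * (y^2)^2 + 35 * y^2 + 25 ≤ (y^2 - 3) * (v - 2) := by
    nlinarith [hA', hC₃', hq3]
  -- basic positivity
  have hv0 : (0:ℝ) < v := by linarith
  have hw0 : (0:ℝ) < v - 2 := by linarith
  have hwq0 : (0:ℝ) < v - 2 + y ^ 2 := by positivity
  obtain ⟨s, hs⟩ : ∃ s : ℝ, s = Real.sqrt (v / (v - 2)) := ⟨_, rfl⟩
  have hss : s ^ 2 = v / (v - 2) := by rw [hs]; exact Real.sq_sqrt (by positivity)
  have hs1 : 1 ≤ s := by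
    rw [hs]
    apply (Real.le_sqrt' one_pos).mpr
    rw [one_pow, le_div_iff₀ hw0]; linarith
  have hδl : 1 + 1/v ≤ s := by
    rw [hs]
    apply (Real.le_sqrt' (by positivity)).mpr
    rw [le_div_iff₀ hw0]
    have key : v - (1+1/v)^2*(v-2) = (3*v+2)/v^2 := by field_simp; ring
    have : (0:ℝ) < (3*v+2)/v^2 := by positivity
    linarith
  have hδu : s ≤ 1 + (1/(v-2) - 1/(2*(v-2)^2) + 1/(2*(v-2)^3)) := by
    have hB0 : (0:ℝ) ≤ 1 + (1/(v-2) - 1/(2*(v-2)^2) + 1/(2*(v-2)^3)) := by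
      have h1 : 1/(2*(v-2)^2) ≤ 1/(v-2) := by
        rw [div_le_div_iff₀ (by positivity) hw0]; nlinarith
      have h2 : (0:ℝ) < 1/(2*(v-2)^3) := by positivity
      linarith
    have key : (1 + (1/(v-2) - 1/(2*(v-2)^2) + 1/(2*(v-2)^3)))^2*(v-2) - v
        = (5*(v-2)^2 - 2*(v-2) + 1)/(4*(v-2)^5) := by
      field_simp; ring
    have hnum : (0:ℝ) ≤ (5*(v-2)^2 - 2*(v-2) + 1)/(4*(v-2)^5) := by
      apply div_nonneg (by nlinarith) (by positivity)
    rw [hs, show (1:ℝ) + (1/(v-2) - 1/(2*(v-2)^2) + 1/(2*(v-2)^3))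
        = Real.sqrt ((1 + (1/(v-2) - 1/(2*(v-2)^2) + 1/(2*(v-2)^3)))^2) by
      rw [Real.sqrt_sq hB0]]
    apply Real.sqrt_le_sqrt
    rw [div_le_iff₀ hw0]
    linarith
  -- the comparison constant
  obtain ⟨c, hc⟩ : ∃ c : ℝ, c = (v+1)*(v-2)*y^2/(v*(v-2+y^2)) := ⟨_, rfl⟩
  have hc0 : 0 ≤ c := by rw [hc]; positivity
  -- pointwise bound on the integrand
  have hpt : ∀ x ∈ Set.Icc (1:ℝ) s,
      ((v + y ^ 2) / (v + y ^ 2 * x ^ 2)) ^ ((v + 1) / 2)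
        ≤ 1 - c*(x-1) + c^2*(x-1)^2 := by
    intro x hx
    obtain ⟨hx1, hxs⟩ := hx
    have hx0 : (0:ℝ) < x := lt_of_lt_of_le one_pos hx1
    have hden : (0:ℝ) < v + y^2*x^2 := by positivity
    have hx2 : x^2*(v-2) ≤ v := by
      have h1 : x^2 ≤ s^2 := pow_le_pow_left₀ (by linarith) hxs 2
      rw [hss] at h1
      calc x^2*(v-2) ≤ (v/(v-2))*(v-2) := mul_le_mul_of_nonneg_right h1 hw0.le
        _ = v := by field_simp
    obtain ⟨t, hT⟩ : ∃ t : ℝ, t = 2*(v-2)*y^2*(x-1)/(v*(v-2+y^2)) := ⟨_, rfl⟩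
    have ht0 : 0 ≤ t := by
      rw [hT]; apply div_nonneg _ (by positivity)
      have : (0:ℝ) ≤ x - 1 := by linarith
      positivity
    -- base ≤ exp(-t)
    have hu : (v+y^2)/(v+y^2*x^2) = 1 - y^2*(x^2-1)/(v+y^2*x^2) := by
      field_simp; ring
    have hu1 : t ≤ y^2*(x^2-1)/(v+y^2*x^2) := by
      rw [hT, div_le_div_iff₀ (by positivity) hden]
      have t1 : (0:ℝ) ≤ v*(v-2)*y^2*(x-1)^2 :=
        mul_nonneg (mul_nonneg (mul_nonneg hv0.le hw0.le) (sq_nonneg y)) (sq_nonneg (x-1))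
      have t2 : (0:ℝ) ≤ y^4*((x-1)*(v-(v-2)*x^2)) :=
        mul_nonneg (pow_nonneg hy0.le 4)
          (mul_nonneg (by linarith) (by nlinarith))
      have t3 : (0:ℝ) ≤ v*y^4*(x-1)^2 :=
        mul_nonneg (mul_nonneg hv0.le (pow_nonneg hy0.le 4)) (sq_nonneg (x-1))
      linarith [t1, t2, t3]
    have hub : (v+y^2)/(v+y^2*x^2) ≤ Real.exp (-t) := by
      rw [hu]
      have h5 := Real.add_one_le_exp (-(y^2*(x^2-1)/(v+y^2*x^2)))
      have h6 : Real.exp (-(y^2*(x^2-1)/(v+y^2*x^2))) ≤ Real.exp (-t) :=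
        Real.exp_le_exp.mpr (by linarith)
      linarith
    have hb0 : (0:ℝ) ≤ (v+y^2)/(v+y^2*x^2) := by positivity
    have h6 : ((v + y ^ 2) / (v + y ^ 2 * x ^ 2)) ^ ((v + 1) / 2)
        ≤ (Real.exp (-t)) ^ ((v + 1) / 2) :=
      Real.rpow_le_rpow hb0 hub (by linarith)
    have h7 : (Real.exp (-t)) ^ ((v + 1) / 2) = Real.exp (-(c*(x-1))) := by
      rw [Real.rpow_def_of_pos (Real.exp_pos _), Real.log_exp]
      congr 1
      rw [hT, hc]
      field_simp
    have h8' : Real.exp (-(c*(x-1))) ≤ 1 - c*(x-1) + (c*(x-1))^2 :=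
      exp_quad _ (mul_nonneg hc0 (by linarith))
    calc ((v + y ^ 2) / (v + y ^ 2 * x ^ 2)) ^ ((v + 1) / 2)
        ≤ (Real.exp (-t)) ^ ((v + 1) / 2) := h6
      _ = Real.exp (-(c*(x-1))) := h7
      _ ≤ 1 - c*(x-1) + (c*(x-1))^2 := h8'
      _ = 1 - c*(x-1) + c^2*(x-1)^2 := by ring
  -- integrability
  have hf_int : IntervalIntegrable
      (fun x => ((v + y ^ 2) / (v + y ^ 2 * x ^ 2)) ^ ((v + 1) / 2)) volume 1 s := by
    apply ContinuousOn.intervalIntegrable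
    apply ContinuousOn.rpow_const
    · apply ContinuousOn.div continuousOn_const (by fun_prop)
      intro x _
      have : (0:ℝ) < v + y^2*x^2 := by positivity
      exact ne_of_gt this
    · intro x _
      right; linarith
  have hg_int : IntervalIntegrable
      (fun x => 1 - c*(x-1) + c^2*(x-1)^2) volume 1 s :=
    ((by fun_prop : Continuous (fun x : ℝ => 1 - c*(x-1) + c^2*(x-1)^2)).intervalIntegrable 1 s)
  have hmono := intervalIntegral.integral_mono_on hs1 hf_int hg_int hpt
  -- value of the polynomial integral
  have hPval : (∫ x in (1:ℝ)..s, (1 - c*(x-1) + c^2*(x-1)^2))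
      = (s-1) - c*(s-1)^2/2 + c^2*(s-1)^3/3 := by
    have hder : ∀ x ∈ Set.uIcc (1:ℝ) s,
        HasDerivAt (fun x : ℝ => (x-1) - c/2*(x-1)^2 + c^2/3*(x-1)^3)
          (1 - c*(x-1) + c^2*(x-1)^2) x := by
      intro x _
      have h1 : HasDerivAt (fun x:ℝ => x - 1) 1 x := (hasDerivAt_id x).sub_const 1
      have h2 := h1.pow 2
      have h3 := h1.pow 3
      have h4 := (h1.sub (h2.const_mul (c/2))).add (h3.const_mul (c^2/3))
      refine h4.congr_deriv ?_
      ring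
    rw [intervalIntegral.integral_eq_sub_of_hasDerivAt hder hg_int]
    norm_num
    ring
  rw [hPval] at hmono
  -- conclude
  have hG : G v y ≤ v * ((s-1) - c*(s-1)^2/2 + c^2*(s-1)^3/3) := by
    unfold G
    rw [← hs]
    exact mul_le_mul_of_nonneg_left hmono hv0.le
  have hfin : ((v-2)+2) * ((s-1) - c*(s-1)^2/2 + c^2*(s-1)^3/3) < 1 := by
    apply final_arith (v-2) (s-1) c (y^2)
    · linarith
    · exact hq3
    · linarith
    · linarith [h32, sq_nonneg (y^2)]
    · linarith [hA]
    · linarith [hδl, (by ring : 1/((v:ℝ)-2+2) = 1/v)]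
    · linarith [hδu]
    · exact hc.trans (by ring)
  have hvv : (v-2)+2 = v := by ring
  rw [hvv] at hfin
  linarith
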